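/- Let Λ be a commutative ring and R a commutative Λ-algebra that is free of finite rank as a Λ-module and admits an isomorphism of R-modules Hom_Λ(R, Λ) ≅ R. Then for every R-module M and every integer i ≥ 0 there is a natural isomorphism of Λ-modules Ext^i_R(M, R) ≅ Ext^i_Λ(M, Λ), where on the right-hand side M is regarded as a Λ-module by restriction of scalars. -/

import Mathlib

open Function CategoryTheory

universe u

section Aux

variable (Λ : Type u) [CommRing Λ] (R : Type u) [CommRing R] [Algebra Λ R]

noncomputable abbrev resF : ModuleCat.{u} R ⥤ ModuleCat.{u} Λ :=
  ModuleCat.restrictScalars.{u} (algebraMap Λ R)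

instance : (resF Λ R).Additive where
  map_add := rfl

theorem Module.Projective.trans' (P : Type u) [Module.Free Λ R] [AddCommGroup P] [Module Λ P]
    [Module R P] [IsScalarTower Λ R P] [Module.Projective R P] : Module.Projective Λ P := by
  obtain ⟨s, hs⟩ := (Module.projective_def'.mp (inferInstance : Module.Projective R P))
  haveI : Module.Projective Λ (P →₀ R) := Module.Projective.of_free
  refine Module.Projective.of_split (M := P →₀ R)
    (s.restrictScalars Λ) ((Finsupp.linearCombination R id).restrictScalars Λ) ?_
  ext x
  exact LinearMap.congr_fun hs x

theorem projective_res [Module.Free Λ R] (X : ModuleCat.{u} R) [Projective X] :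
    Projective ((resF Λ R).obj X) := by
  have h1 : Module.Projective R X :=
    (IsProjective.iff_projective X).mpr (inferInstanceAs (Projective X))
  letI : Module Λ X := Module.compHom X (algebraMap Λ R)
  haveI : IsScalarTower Λ R X := ⟨fun l r x => by
    show (l • r) • x = algebraMap Λ R l • (r • x)
    rw [Algebra.smul_def, mul_smul]⟩
  haveI : Module.Projective Λ X := Module.Projective.trans' Λ R X
  exact (IsProjective.iff_projective X).mp this

/-- identity equivalence between the two restriction-of-scalars conventions. -/
def restrictEquiv (X : ModuleCat.{u} R) :
    RestrictScalars Λ R X ≃ₗ[Λ] ((resF Λ R).obj X : Type u) where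
  toFun := fun x => x
  invFun := fun x => x
  left_inv := fun _ => rfl
  right_inv := fun _ => rfl
  map_add' := fun _ _ => rfl
  map_smul' := fun _ _ => rfl

variable {Λ R}

def unR {X : ModuleCat.{u} R}
    (f : ((resF Λ R).obj (ModuleCat.of R (X ⟶ ModuleCat.of R R)) : Type u)) :
    X →ₗ[R] R := (f : X ⟶ ModuleCat.of R R).hom

noncomputable def unΛ {X : ModuleCat.{u} R}
    (h : (ModuleCat.of Λ ((resF Λ R).obj X ⟶ ModuleCat.of Λ Λ) : Type u)) :
    ((resF Λ R).obj X : Type u) →ₗ[Λ] Λ := (h : (resF Λ R).obj X ⟶ ModuleCat.of Λ Λ).hom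

variable (φ : R ≃ₗ[Λ] (R →ₗ[Λ] Λ)) (hφ : ∀ r s x : R, φ (r * s) x = φ s (r * x))

/-- The auxiliary `Λ`-linear map `R →ₗ[Λ] Λ`, `y ↦ h (y • x)`. -/
noncomputable def gorAux {X : ModuleCat.{u} R}
    (h : (ModuleCat.of Λ ((resF Λ R).obj X ⟶ ModuleCat.of Λ Λ) : Type u)) (x : X) :
    R →ₗ[Λ] Λ where
  toFun := fun y => unΛ h (y • x)
  map_add' := fun y z => by
    show unΛ h ((y + z) • x) = unΛ h (y • x) + unΛ h (z • x)
    rw [add_smul]; exact (unΛ h).map_add _ _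
  map_smul' := fun l y => by
    have : (l • y) • x = algebraMap Λ R l • (y • x) := by
      rw [Algebra.smul_def, mul_smul]
    show unΛ h ((l • y) • x) = l • unΛ h (y • x)
    rw [this]
    exact (unΛ h).map_smul l (y • x)

/-- The Gorenstein duality isomorphism `Hom_R(X,R) ≅ Hom_Λ(X,Λ)` of `Λ`-modules. -/
noncomputable def gorIso (φ : R ≃ₗ[Λ] (R →ₗ[Λ] Λ)) (hφ : ∀ r s x : R, φ (r * s) x = φ s (r * x))
    (X : ModuleCat.{u} R) :
    (resF Λ R).obj (ModuleCat.of R (X ⟶ ModuleCat.of R R)) ≅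
      ModuleCat.of Λ ((resF Λ R).obj X ⟶ ModuleCat.of Λ Λ) where
  hom := ModuleCat.homAddEquiv.symm
    { toFun := fun f => ModuleCat.homAddEquiv.symm
        { toFun := fun x => φ (unR f x) 1
          map_add' := fun x y => by
            show φ (unR f (x + y)) 1 = φ (unR f x) 1 + φ (unR f y) 1
            exact (congrArg (fun t => φ t 1) ((unR f).map_add x y)).trans (by rw [map_add]; rfl)
          map_smul' := fun l x => by
            show φ (unR f (algebraMap Λ R l • x)) 1 = l • φ (unR f x) 1
            exact (congrArg (fun t => φ t 1) ((unR f).map_smul (algebraMap Λ R l) x)).trans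
              (by rw [algebraMap_smul, map_smul]; rfl) }
      map_add' := fun f g => by
        apply ModuleCat.hom_ext; apply LinearMap.ext; intro x
        show φ ((unR f + unR g) x) 1 = φ (unR f x) 1 + φ (unR g x) 1
        show φ (unR f x + unR g x) 1 = _; rw [map_add]
        rfl
      map_smul' := fun l f => by
        apply ModuleCat.hom_ext; apply LinearMap.ext; intro x
        show φ ((algebraMap Λ R l • unR f) x) 1 = l • (φ (unR f x) 1)
        show φ (algebraMap Λ R l • unR f x) 1 = _; rw [algebraMap_smul, map_smul]
        rfl }
  inv := ModuleCat.homAddEquiv.symm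
    { toFun := fun h => ModuleCat.homAddEquiv.symm
        { toFun := fun x => φ.symm (gorAux h x)
          map_add' := fun x y => by
            have : gorAux h (x + y) = gorAux h x + gorAux h y := by
              apply LinearMap.ext; intro y'
              show unΛ h (y' • (x + y)) = unΛ h (y' • x) + unΛ h (y' • y)
              rw [smul_add]; exact (unΛ h).map_add _ _
            show φ.symm (gorAux h (x + y)) = φ.symm (gorAux h x) + φ.symm (gorAux h y)
            rw [this, map_add]
          map_smul' := fun r x => by
            show φ.symm (gorAux h (r • x)) = r • φ.symm (gorAux h x)
            apply φ.injective
            rw [φ.apply_symm_apply]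
            apply LinearMap.ext; intro y
            rw [smul_eq_mul, hφ r (φ.symm (gorAux h x)) y, φ.apply_symm_apply]
            show unΛ h (y • r • x) = unΛ h ((r * y) • x)
            rw [← mul_smul, mul_comm] }
      map_add' := fun h₁ h₂ => by
        apply ModuleCat.hom_ext; apply LinearMap.ext; intro x
        have : gorAux (h₁ + h₂) x = gorAux h₁ x + gorAux h₂ x := by
          apply LinearMap.ext; intro y; rfl
        show φ.symm (gorAux (h₁ + h₂) x) = φ.symm (gorAux h₁ x) + φ.symm (gorAux h₂ x)
        rw [this, map_add]
      map_smul' := fun l h => by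
        apply ModuleCat.hom_ext; apply LinearMap.ext; intro x
        have : gorAux (l • h) x = l • gorAux h x := by
          apply LinearMap.ext; intro y; rfl
        show φ.symm (gorAux (l • h) x) = algebraMap Λ R l • φ.symm (gorAux h x)
        rw [this, map_smul, Algebra.smul_def]
        rfl }
  hom_inv_id := by
    apply ModuleCat.hom_ext; apply LinearMap.ext; intro f
    apply ModuleCat.hom_ext; apply LinearMap.ext; intro x
    show φ.symm _ = unR f x
    apply φ.injective
    rw [φ.apply_symm_apply]
    apply LinearMap.ext; intro y
    show φ (unR f (y • x)) 1 = φ (unR f x) y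
    rw [map_smul, smul_eq_mul, hφ, mul_one]
  inv_hom_id := by
    apply ModuleCat.hom_ext; apply LinearMap.ext; intro h
    apply ModuleCat.hom_ext; apply LinearMap.ext; intro x
    show φ (φ.symm (gorAux h x)) 1 = unΛ h x
    rw [φ.apply_symm_apply]
    show unΛ h ((1 : R) • x) = unΛ h x
    rw [one_smul]

end Aux

/-- The `n`-th Ext module of two modules over a commutative ring. -/
noncomputable def extMod (R : Type u) [CommRing R] (n : ℕ) (M N : ModuleCat.{u} R) :
    ModuleCat.{u} R :=
  ((Ext R (ModuleCat.{u} R) n).obj (Opposite.op M)).obj N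

/-- If `R` is a `Λ`-algebra, free of finite rank as a `Λ`-module, with
`Hom_Λ(R, Λ) ≅ R` as `R`-modules, then for every `R`-module `M` and every `i ≥ 0` there is an
isomorphism of `Λ`-modules `Ext^i_R(M, R) ≅ Ext^i_Λ(M, Λ)`, where on the right-hand side `M`
is regarded as a `Λ`-module by restriction of scalars. -/
theorem ext_iso_of_relative_gorenstein
    (Λ : Type u) [CommRing Λ]
    (R : Type u) [CommRing R] [Algebra Λ R] [Module.Free Λ R] [Module.Finite Λ R]
    (hGor : ∃ φ : R ≃ₗ[Λ] (R →ₗ[Λ] Λ), ∀ r s x : R, φ (r * s) x = φ s (r * x))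
    (M : Type u) [AddCommGroup M] [Module R M] (i : ℕ) :
    Nonempty
      ((RestrictScalars Λ R (extMod R i (ModuleCat.of R M) (ModuleCat.of R R))) ≃ₗ[Λ]
        (extMod Λ i (@ModuleCat.of Λ _ (RestrictScalars Λ R M) _ (RestrictScalars.module Λ R M)) (ModuleCat.of Λ Λ))) := by
  obtain ⟨φ, hφ⟩ := hGor
  obtain ⟨P⟩ := (HasProjectiveResolution.out (Z := ModuleCat.of R M))
  let F := resF Λ R
  let eM : F.obj (ModuleCat.of R M) ≅ @ModuleCat.of Λ _ (RestrictScalars Λ R M) _ (RestrictScalars.module Λ R M) :=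
    LinearEquiv.toModuleIso ((restrictEquiv Λ R (ModuleCat.of R M)).symm)
  let Q : ProjectiveResolution (@ModuleCat.of Λ _ (RestrictScalars Λ R M) _ (RestrictScalars.module Λ R M)) :=
    { complex := (F.mapHomologicalComplex _).obj P.complex
      projective := fun n => projective_res Λ R _
      π := (F.mapHomologicalComplex _).map P.π ≫
        (HomologicalComplex.singleMapHomologicalComplex F _ 0).hom.app (ModuleCat.of R M) ≫
        (HomologicalComplex.single _ _ 0).map eM.hom
      quasiIso := by infer_instance }
  let C := P.complex.linearYonedaObj R (ModuleCat.of R R)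
  let e1 : F.obj (extMod R i (ModuleCat.of R M) (ModuleCat.of R R)) ≅ F.obj (C.homology i) :=
    F.mapIso (P.isoExt i (ModuleCat.of R R))
  let e2 : F.obj (C.homology i) ≅ ((F.mapHomologicalComplex _).obj C).homology i :=
    (ShortComplex.mapHomologyIso (C.sc i) F).symm
  let e3c : (F.mapHomologicalComplex _).obj C ≅
      Q.complex.linearYonedaObj Λ (ModuleCat.of Λ Λ) :=
    HomologicalComplex.Hom.isoOfComponents (fun n => gorIso φ hφ (P.complex.X n))
      (fun n m _ => by
        apply ModuleCat.hom_ext; apply LinearMap.ext; intro f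
        apply ModuleCat.hom_ext; apply LinearMap.ext; intro x
        rfl)
  let e3 : ((F.mapHomologicalComplex _).obj C).homology i ≅
      (Q.complex.linearYonedaObj Λ (ModuleCat.of Λ Λ)).homology i :=
    (HomologicalComplex.homologyFunctor _ _ i).mapIso e3c
  let e4 : (Q.complex.linearYonedaObj Λ (ModuleCat.of Λ Λ)).homology i ≅
      extMod Λ i (@ModuleCat.of Λ _ (RestrictScalars Λ R M) _ (RestrictScalars.module Λ R M)) (ModuleCat.of Λ Λ) :=
    (Q.isoExt i (ModuleCat.of Λ Λ)).symm
  exact ⟨(restrictEquiv Λ R _).trans (e1 ≪≫ e2 ≪≫ e3 ≪≫ e4).toLinearEquiv⟩
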